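/- arXiv:1911.10163 — 4 statements merged into one kernel-verified Lean document; each statement's English description precedes it below -/
import Mathlib

section
/- Let M be a complex-valued continuous kernel on the triangle {(x,t) : 0 ≤ t ≤ x ≤ π} and λ ∈ ℂ. Define e₁(x,λ) = i·∫₀ˣ exp(−iλ(x−t)) · (∫₀ᵗ M(t,τ)·exp(−iλτ) dτ) dt (the first successive approximation in equation (8) applied to e₀(x,λ) = exp(−iλx)). Then e₁(x,λ) = ∫₀ˣ G₁(x,s)·exp(−iλs) ds for all x ∈ [0,π], where G₁(x,t) = i·∫_{x−t}^{x} M(s, t+s−x) ds; moreover G₁ is continuous on the triangle and G₁(x,0) = 0. -/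
open Complex MeasureTheory Set Real

/-- The triangle `{(x,t) : 0 ≤ t ≤ x ≤ π}`. -/
def Triangle : Set (ℝ × ℝ) := {p | 0 ≤ p.2 ∧ p.2 ≤ p.1 ∧ p.1 ≤ Real.pi}

lemma isClosed_triangle : IsClosed Triangle := by
  have : Triangle = {p : ℝ × ℝ | 0 ≤ p.2} ∩ ({p | p.2 ≤ p.1} ∩ {p | p.1 ≤ Real.pi}) := by
    ext p; simp [Triangle, and_assoc]
  rw [this]
  exact (isClosed_le continuous_const continuous_snd).inter
    ((isClosed_le continuous_snd continuous_fst).inter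
      (isClosed_le continuous_fst continuous_const))

lemma exists_ext (M : ℝ → ℝ → ℂ)
    (hM : ContinuousOn (fun p : ℝ × ℝ => M p.1 p.2) Triangle) :
    ∃ N : ℝ × ℝ → ℂ, Continuous N ∧ ∀ p ∈ Triangle, N p = M p.1 p.2 := by
  obtain ⟨g, hg⟩ := ContinuousMap.exists_restrict_eq (Y := ℂ) isClosed_triangle
    ⟨Triangle.restrict (fun p : ℝ × ℝ => M p.1 p.2), hM.restrict⟩
  exact ⟨g, g.continuous, fun p hp => congrFun (congrArg DFunLike.coe hg) ⟨p, hp⟩⟩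

/-- shift of interval integral -/
lemma shift_integral (f : ℝ → ℂ) (a c : ℝ) :
    ∫ u in (c - a)..c, f u = ∫ v in (0:ℝ)..a, f (v + (c - a)) := by
  rw [intervalIntegral.integral_comp_add_right f (c - a)]
  norm_num

/-- Fubini for the region {(t,s) ∈ [0,x]² : s + t ≥ x}. -/
lemma fubini_tri (h : ℝ → ℝ → ℂ) (hh : Continuous fun p : ℝ × ℝ => h p.1 p.2)
    {x : ℝ} (hx : 0 ≤ x) :
    ∫ t in (0:ℝ)..x, ∫ s in (x - t)..x, h t s
      = ∫ s in (0:ℝ)..x, ∫ t in (x - s)..x, h t s := by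
  set S : Set (ℝ × ℝ) := {p | x - p.1 < p.2} ∩ {p | p.2 ≤ x} with hSdef
  have hS : MeasurableSet S :=
    ((isOpen_lt (continuous_const.sub continuous_fst) continuous_snd).measurableSet).inter
      (isClosed_le continuous_snd continuous_const).measurableSet
  set F : ℝ × ℝ → ℂ := S.indicator (fun p => h p.1 p.2) with hFdef
  have hFint : Integrable (Function.uncurry fun t s => F (t, s))
      ((volume.restrict (Ioc 0 x)).prod (volume.restrict (Ioc 0 x))) := by
    have : (Function.uncurry fun t s => F (t, s)) = F := rfl
    rw [this, Measure.prod_restrict]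
    refine Integrable.indicator ?_ hS
    refine IntegrableOn.mono_set ?_ (prod_mono Ioc_subset_Icc_self Ioc_subset_Icc_self)
    exact hh.continuousOn.integrableOn_compact (isCompact_Icc.prod isCompact_Icc)
  have key := integral_integral_swap (f := fun t s => F (t, s)) hFint
  have L : ∫ t in Ioc (0:ℝ) x, ∫ s in Ioc (0:ℝ) x, F (t, s)
      = ∫ t in Ioc (0:ℝ) x, ∫ s in (x - t)..x, h t s := by
    refine setIntegral_congr_fun measurableSet_Ioc (fun t ht => ?_)
    have h1 : (fun s => F (t, s)) = (Ioc (x - t) x).indicator (fun s => h t s) := by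
      funext s
      simp [hFdef, hSdef, indicator_apply, mem_Ioc, sub_lt_iff_lt_add, lt_sub_iff_add_lt]
    rw [h1, setIntegral_indicator measurableSet_Ioc, Ioc_inter_Ioc,
      intervalIntegral.integral_of_le (by linarith [ht.1, ht.2] : x - t ≤ x)]
    congr 1
    rw [max_eq_right (by linarith [ht.1, ht.2]), min_self]
  have R : ∫ s in Ioc (0:ℝ) x, ∫ t in Ioc (0:ℝ) x, F (t, s)
      = ∫ s in Ioc (0:ℝ) x, ∫ t in (x - s)..x, h t s := by
    refine setIntegral_congr_fun measurableSet_Ioc (fun s hs => ?_)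
    have h1 : (fun t => F (t, s)) = (Ioi (x - s)).indicator (fun t => h t s) := by
      funext t
      simp [hFdef, hSdef, indicator_apply, mem_Ioi, hs.2, sub_lt_comm]
    rw [h1, setIntegral_indicator measurableSet_Ioi, Ioc_inter_Ioi,
      intervalIntegral.integral_of_le (by linarith [hs.1, hs.2] : x - s ≤ x)]
    congr 1
    rw [max_eq_right (by linarith [hs.1, hs.2])]
  rw [intervalIntegral.integral_of_le hx, intervalIntegral.integral_of_le hx, ← L, ← R]
  exact key

/-- The first successive approximation `e₁(x,λ)` (applied to `e₀(x,λ) = exp(−iλx)`)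
equals `∫₀ˣ G₁(x,s) exp(−iλs) ds` with `G₁(x,t) = i ∫_{x−t}^{x} M(s, t+s−x) ds`;
moreover `G₁` is continuous on the triangle and `G₁(x,0) = 0`. -/
theorem stmt_2 (M : ℝ → ℝ → ℂ)
    (hM : ContinuousOn (fun p : ℝ × ℝ => M p.1 p.2) Triangle) (lam : ℂ) :
    (∀ x ∈ Icc (0:ℝ) Real.pi,
      (Complex.I * ∫ t in (0:ℝ)..x,
          Complex.exp (-Complex.I * lam * (x - t))
            * ∫ τ in (0:ℝ)..t, M t τ * Complex.exp (-Complex.I * lam * τ))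
      = ∫ s in (0:ℝ)..x,
          (Complex.I * ∫ u in (x - s)..x, M u (s + u - x))
            * Complex.exp (-Complex.I * lam * s)) ∧
    ContinuousOn
      (fun p : ℝ × ℝ => Complex.I * ∫ u in (p.1 - p.2)..p.1, M u (p.2 + u - p.1))
      Triangle ∧
    (∀ x ∈ Icc (0:ℝ) Real.pi,
      (Complex.I * ∫ u in (x - 0)..x, M u (0 + u - x)) = 0) := by
  obtain ⟨N, hNc, hNM⟩ := exists_ext M hM
  refine ⟨?_, ?_, ?_⟩
  · intro x hx
    obtain ⟨hx0, hxπ⟩ := hx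
    set h : ℝ → ℝ → ℂ := fun t s => N (t, s + t - x) * Complex.exp (-Complex.I * lam * s)
      with hhdef
    have hhc : Continuous fun p : ℝ × ℝ => h p.1 p.2 := by
      apply Continuous.mul
      · exact hNc.comp (by fun_prop)
      · fun_prop
    -- LHS transformation
    have hL : (Complex.I * ∫ t in (0:ℝ)..x,
          Complex.exp (-Complex.I * lam * (x - t))
            * ∫ τ in (0:ℝ)..t, M t τ * Complex.exp (-Complex.I * lam * τ))
        = Complex.I * ∫ t in (0:ℝ)..x, ∫ s in (x - t)..x, h t s := by
      congr 1
      refine intervalIntegral.integral_congr (fun t ht => ?_)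
      rw [uIcc_of_le hx0] at ht
      have e1 : ∫ s in (x - t)..x, h t s
          = ∫ v in (0:ℝ)..t, Complex.exp (-Complex.I * lam * (x - t))
              * (N (t, v) * Complex.exp (-Complex.I * lam * v)) := by
        rw [shift_integral (fun s => h t s) t x]
        refine intervalIntegral.integral_congr (fun v hv => ?_)
        have c1 : v + (x - t) + t - x = v := by ring
        rw [hhdef]
        simp only [c1]
        conv_rhs => rw [mul_comm (Complex.exp (-Complex.I * lam * (x - t))), mul_assoc,
          ← Complex.exp_add]
        congr 2
        push_cast
        ring
      rw [e1, intervalIntegral.integral_const_mul]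
      congr 1
      refine intervalIntegral.integral_congr (fun τ hτ => ?_)
      rw [uIcc_of_le (by linarith [ht.1] : (0:ℝ) ≤ t)] at hτ
      rw [hNM (t, τ) ⟨hτ.1, hτ.2, by linarith [ht.2]⟩]
    -- RHS transformation
    have hR : (∫ s in (0:ℝ)..x,
          (Complex.I * ∫ u in (x - s)..x, M u (s + u - x))
            * Complex.exp (-Complex.I * lam * s))
        = Complex.I * ∫ s in (0:ℝ)..x, ∫ t in (x - s)..x, h t s := by
      rw [← intervalIntegral.integral_const_mul]
      refine intervalIntegral.integral_congr (fun s hs => ?_)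
      rw [uIcc_of_le hx0] at hs
      have e1 : ∫ t in (x - s)..x, h t s
          = (∫ u in (x - s)..x, M u (s + u - x)) * Complex.exp (-Complex.I * lam * s) := by
        rw [← intervalIntegral.integral_mul_const]
        refine intervalIntegral.integral_congr (fun u hu => ?_)
        rw [uIcc_of_le (by linarith [hs.1, hs.2] : x - s ≤ x)] at hu
        rw [hhdef]
        dsimp only
        rw [hNM (u, s + u - x) ⟨show (0:ℝ) ≤ s + u - x by linarith [hu.1],
          show s + u - x ≤ u by linarith [hs.2], show u ≤ Real.pi by linarith [hu.2, hxπ]⟩]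
      rw [e1]
      ring
    rw [hL, fubini_tri h hhc hx0]
    rw [hR]
  · have hG : Continuous fun p : ℝ × ℝ =>
        Complex.I * ∫ v in (0:ℝ)..p.2, N (v + (p.1 - p.2), v) := by
      apply continuous_const.mul
      exact intervalIntegral.continuous_parametric_intervalIntegral_of_continuous
        (f := fun (p : ℝ × ℝ) v => N (v + (p.1 - p.2), v))
        (hNc.comp (by fun_prop)) continuous_snd
    refine hG.continuousOn.congr ?_
    intro p hp
    dsimp only
    congr 1
    rw [shift_integral (fun u => M u (p.2 + u - p.1)) p.2 p.1]
    refine intervalIntegral.integral_congr (fun v hv => ?_)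
    rw [uIcc_of_le hp.1] at hv
    have c1 : p.2 + (v + (p.1 - p.2)) - p.1 = v := by ring
    rw [c1, ← hNM (v + (p.1 - p.2), v)
      ⟨show (0:ℝ) ≤ v from hv.1, show v ≤ v + (p.1 - p.2) by linarith [hp.2.1],
        show v + (p.1 - p.2) ≤ Real.pi by linarith [hv.2, hp.2.2]⟩]
  · intro x hx
    simp
end

section
/- Let M be a complex-valued continuous kernel on the triangle {(x,t) : 0 ≤ t ≤ x ≤ π}. Define G₁(x,t) = i·∫_{x−t}^{x} M(s, t+s−x) ds and, recursively, G_{n+1}(x,t) = i·∫_{x−t}^{x} (∫_{t+s−x}^{s} M(s,τ)·G_n(τ, t+s−x) dτ) ds for n ≥ 1. Then the series ∑_{n=1}^{∞} G_n(x,t) converges absolutely and uniformly on the triangle {(x,t) : 0 ≤ t ≤ x ≤ π}, and its sum G(x,t) is continuous there. -/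
open Complex MeasureTheory Set Real Filter

/-- The successive kernels: `Gseq M 0 = G₁` with
`G₁(x,t) = i ∫_{x−t}^{x} M(s, t+s−x) ds`, and `Gseq M n = G_{n+1}` with
`G_{n+1}(x,t) = i ∫_{x−t}^{x} ∫_{t+s−x}^{s} M(s,τ) Gₙ(τ, t+s−x) dτ ds`. -/
noncomputable def Gseq (M : ℝ → ℝ → ℂ) : ℕ → ℝ → ℝ → ℂ
  | 0 => fun x t => Complex.I * ∫ s in (x - t)..x, M s (t + s - x)
  | n + 1 => fun x t => Complex.I * ∫ s in (x - t)..x,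
      ∫ τ in (t + s - x)..s, M s τ * Gseq M n τ (t + s - x)

lemma cont_both {X : Type*} [TopologicalSpace X] [FirstCountableTopology X]
    {f : X → ℝ → ℂ} (hf : Continuous fun q : X × ℝ => f q.1 q.2)
    {a b : X → ℝ} (ha : Continuous a) (hb : Continuous b) :
    Continuous fun p => ∫ s in a p..b p, f p s := by
  have hint : ∀ (p : X) (c d : ℝ), IntervalIntegrable (f p) volume c d := fun p c d =>
    (hf.comp (Continuous.prodMk_right p)).intervalIntegrable c d
  have key : ∀ p, ∫ s in a p..b p, f p s
      = (∫ s in (0:ℝ)..b p, f p s) - ∫ s in (0:ℝ)..a p, f p s := fun p =>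
    eq_sub_iff_add_eq'.2 (intervalIntegral.integral_add_adjacent_intervals
      (hint p 0 (a p)) (hint p (a p) (b p)))
  simp only [key]
  exact (intervalIntegral.continuous_parametric_intervalIntegral_of_continuous hf hb).sub
    (intervalIntegral.continuous_parametric_intervalIntegral_of_continuous hf ha)

lemma Gseq_cont {N : ℝ → ℝ → ℂ} (hN : Continuous fun p : ℝ × ℝ => N p.1 p.2) (n : ℕ) :
    Continuous fun p : ℝ × ℝ => Gseq N n p.1 p.2 := by
  induction n with
  | zero =>
    simp only [Gseq]
    apply continuous_const.mul
    apply cont_both (f := fun (p : ℝ × ℝ) s => N s (p.2 + s - p.1))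
      (a := fun p : ℝ × ℝ => p.1 - p.2) (b := fun p : ℝ × ℝ => p.1)
    · exact hN.comp (continuous_snd.prodMk (by fun_prop))
    · fun_prop
    · fun_prop
  | succ n ih =>
    simp only [Gseq]
    apply continuous_const.mul
    apply cont_both
      (f := fun (p : ℝ × ℝ) s => ∫ τ in (p.2 + s - p.1)..s, N s τ * Gseq N n τ (p.2 + s - p.1))
      (a := fun p : ℝ × ℝ => p.1 - p.2) (b := fun p : ℝ × ℝ => p.1)
    · apply cont_both (f := fun (q : (ℝ × ℝ) × ℝ) τ => N q.2 τ * Gseq N n τ (q.1.2 + q.2 - q.1.1))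
        (a := fun q : (ℝ × ℝ) × ℝ => q.1.2 + q.2 - q.1.1) (b := fun q : (ℝ × ℝ) × ℝ => q.2)
      · exact (hN.comp ((by fun_prop : Continuous fun r : ((ℝ × ℝ) × ℝ) × ℝ => r.1.2).prodMk
            continuous_snd)).mul
          (ih.comp (continuous_snd.prodMk (by fun_prop)))
      · fun_prop
      · fun_prop
    · fun_prop
    · fun_prop


lemma Gseq_bound {N : ℝ → ℝ → ℂ} (hN : Continuous fun p : ℝ × ℝ => N p.1 p.2)
    {C : ℝ} (hC0 : 0 ≤ C)
    (hC : ∀ s τ : ℝ, s ∈ Icc 0 Real.pi → τ ∈ Icc 0 Real.pi → ‖N s τ‖ ≤ C) (n : ℕ) :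
    ∀ x t : ℝ, (x, t) ∈ Triangle →
      ‖Gseq N n x t‖ ≤ (C * (Real.pi + 1)) ^ (n + 1) * t * x ^ n / n.factorial := by
  have hpi : (0:ℝ) < Real.pi := Real.pi_pos
  set D := C * (Real.pi + 1) with hD
  have hD0 : 0 ≤ D := by positivity
  have hCD : C ≤ D := by nlinarith
  have hCpD : C * Real.pi ≤ D := by nlinarith
  induction n with
  | zero =>
    rintro x t ⟨ht0, htx, hxpi⟩
    simp only [Triangle, mem_setOf_eq] at ht0 htx hxpi
    simp only [Gseq, norm_mul, Complex.norm_I, one_mul, pow_zero, pow_one, Nat.factorial_zero,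
      Nat.cast_one, div_one, mul_one]
    have h1 : ∀ s ∈ Set.uIoc (x - t) x, ‖N s (t + s - x)‖ ≤ C := by
      intro s hs
      rw [uIoc_of_le (by linarith)] at hs
      exact hC _ _ ⟨by linarith [hs.1], by linarith [hs.2]⟩
        ⟨by linarith [hs.1], by linarith [hs.2]⟩
    calc ‖∫ s in (x - t)..x, N s (t + s - x)‖ ≤ C * |x - (x - t)| :=
          intervalIntegral.norm_integral_le_of_norm_le_const h1
      _ = C * t := by rw [show x - (x - t) = t by ring, _root_.abs_of_nonneg ht0]
      _ ≤ D ^ (0 + 1) * t := by rw [zero_add, pow_one]; nlinarith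
  | succ n ih =>
    rintro x t ⟨ht0, htx, hxpi⟩
    simp only [Triangle, mem_setOf_eq] at ht0 htx hxpi
    simp only [Gseq, norm_mul, Complex.norm_I, one_mul]
    set inner : ℝ → ℂ := fun s => ∫ τ in (t + s - x)..s, N s τ * Gseq N n τ (t + s - x)
      with hinner
    have hfact : (0:ℝ) < n.factorial := by positivity
    -- pointwise bound on inner
    have step1 : ∀ s ∈ Icc (x - t) x, ‖inner s‖ ≤ D ^ (n + 2) * t * s ^ n / n.factorial := by
      intro s hs
      obtain ⟨hs1, hs2⟩ := hs
      have h1 : ∀ τ ∈ Set.uIoc (t + s - x) s,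
          ‖N s τ * Gseq N n τ (t + s - x)‖ ≤ C * (D ^ (n + 1) * t * s ^ n / n.factorial) := by
        intro τ hτ
        rw [uIoc_of_le (by linarith)] at hτ
        obtain ⟨hτ1, hτ2⟩ := hτ
        rw [norm_mul]
        have hNb : ‖N s τ‖ ≤ C := hC _ _ ⟨by linarith, by linarith⟩
          ⟨by linarith, by linarith⟩
        have hGb : ‖Gseq N n τ (t + s - x)‖ ≤ D ^ (n + 1) * (t + s - x) * τ ^ n / n.factorial :=
          ih τ (t + s - x) ⟨by dsimp; linarith, by dsimp; linarith, by dsimp; linarith⟩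
        have hτ0 : (0:ℝ) ≤ τ := by linarith
        have h2 : D ^ (n + 1) * (t + s - x) * τ ^ n / n.factorial
            ≤ D ^ (n + 1) * t * s ^ n / n.factorial := by
          gcongr <;> linarith
        exact mul_le_mul hNb (hGb.trans h2) (norm_nonneg _) hC0
      have h3 : ‖inner s‖ ≤ C * (D ^ (n + 1) * t * s ^ n / n.factorial) * |s - (t + s - x)| :=
        intervalIntegral.norm_integral_le_of_norm_le_const h1
      have hs0 : 0 ≤ s := by linarith
      have habs : |s - (t + s - x)| = x - t := by
        rw [show s - (t + s - x) = x - t by ring, _root_.abs_of_nonneg (by linarith)]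
      rw [habs] at h3
      refine h3.trans ?_
      have h4 : C * (D ^ (n + 1) * t * s ^ n / n.factorial) * (x - t)
          = (C * (x - t)) * (D ^ (n + 1) * t * s ^ n / n.factorial) := by ring
      have h5 : (C * (x - t)) * (D ^ (n + 1) * t * s ^ n / n.factorial)
          ≤ D * (D ^ (n + 1) * t * s ^ n / n.factorial) := by
        apply mul_le_mul_of_nonneg_right _ (by positivity)
        nlinarith
      rw [h4]
      refine h5.trans (le_of_eq ?_)
      rw [pow_succ]
      ring
    -- continuity / integrability of inner
    have hinner_cont : Continuous inner := by
      apply cont_both (f := fun (s : ℝ) τ => N s τ * Gseq N n τ (t + s - x))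
        (a := fun s : ℝ => t + s - x) (b := fun s : ℝ => s)
      · exact (hN.comp continuous_id').mul
          ((Gseq_cont hN n).comp (continuous_snd.prodMk (by fun_prop)))
      · fun_prop
      · fun_prop
    have hInt1 : IntervalIntegrable (fun s => ‖inner s‖) volume (x - t) x :=
      hinner_cont.norm.intervalIntegrable _ _
    have hInt2 : IntervalIntegrable
        (fun s : ℝ => (D ^ (n + 2) * t / n.factorial) * s ^ n) volume (x - t) x :=
      (Continuous.intervalIntegrable (by fun_prop)) _ _
    have step2 : ‖∫ s in (x - t)..x, inner s‖ ≤ ∫ s in (x - t)..x, ‖inner s‖ :=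
      intervalIntegral.norm_integral_le_integral_norm (by linarith)
    have step3 : (∫ s in (x - t)..x, ‖inner s‖)
        ≤ ∫ s in (x - t)..x, (D ^ (n + 2) * t / n.factorial) * s ^ n := by
      apply intervalIntegral.integral_mono_on (by linarith) hInt1 hInt2
      intro s hs
      refine (step1 s hs).trans (le_of_eq (by ring))
    have step4 : (∫ s in (x - t)..x, (D ^ (n + 2) * t / n.factorial) * s ^ n)
        = (D ^ (n + 2) * t / n.factorial) * ((x ^ (n + 1) - (x - t) ^ (n + 1)) / (n + 1)) := by
      rw [intervalIntegral.integral_const_mul, integral_pow]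
    have hfinal : (D ^ (n + 2) * t / n.factorial) * ((x ^ (n + 1) - (x - t) ^ (n + 1)) / (n + 1))
        ≤ D ^ (n + 2) * t * x ^ (n + 1) / (n + 1).factorial := by
      have hxt : (0:ℝ) ≤ (x - t) ^ (n + 1) := pow_nonneg (by linarith) _
      have h6 : ((n+1).factorial : ℝ) = ((n:ℝ) + 1) * n.factorial := by
        rw [Nat.factorial_succ]; push_cast; ring
      have heq : (D ^ (n + 2) * t / (n.factorial:ℝ)) * (x ^ (n + 1) / ((n:ℝ) + 1))
          = D ^ (n + 2) * t * x ^ (n + 1) / ((n + 1).factorial : ℝ) := by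
        rw [h6, div_mul_div_comm, mul_comm ((n.factorial:ℝ)) (((n:ℝ) + 1))]
      rw [← heq]
      have hc : (0:ℝ) ≤ D ^ (n + 2) * t / n.factorial := by positivity
      have hn1 : (0:ℝ) < (n:ℝ) + 1 := by positivity
      gcongr
      linarith
    calc ‖∫ s in (x - t)..x, inner s‖ ≤ _ := step2
      _ ≤ _ := step3
      _ = _ := step4
      _ ≤ _ := hfinal

lemma Gseq_congr {M N : ℝ → ℝ → ℂ} (h : ∀ x t : ℝ, (x, t) ∈ Triangle → M x t = N x t) :
    ∀ n : ℕ, ∀ x t : ℝ, (x, t) ∈ Triangle → Gseq M n x t = Gseq N n x t := by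
  intro n
  induction n with
  | zero =>
    rintro x t ⟨ht0, htx, hxpi⟩
    simp only [Triangle, mem_setOf_eq] at ht0 htx hxpi
    simp only [Gseq]
    congr 1
    apply intervalIntegral.integral_congr
    intro s hs
    rw [uIcc_of_le (by linarith : x - t ≤ x)] at hs
    exact h s (t + s - x) ⟨by dsimp; linarith [hs.1], by dsimp; linarith,
      by dsimp; linarith [hs.2]⟩
  | succ n ih =>
    rintro x t ⟨ht0, htx, hxpi⟩
    simp only [Triangle, mem_setOf_eq] at ht0 htx hxpi
    simp only [Gseq]
    congr 1
    apply intervalIntegral.integral_congr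
    intro s hs
    rw [uIcc_of_le (by linarith : x - t ≤ x)] at hs
    obtain ⟨hs1, hs2⟩ := hs
    apply intervalIntegral.integral_congr
    intro τ hτ
    rw [uIcc_of_le (by linarith : t + s - x ≤ s)] at hτ
    obtain ⟨hτ1, hτ2⟩ := hτ
    simp only [h s τ ⟨by dsimp; linarith, by dsimp; linarith, by dsimp; linarith⟩,
      ih τ (t + s - x) ⟨by dsimp; linarith, by dsimp; linarith, by dsimp; linarith⟩]

/-- The series `∑_{n≥1} Gₙ(x,t)` converges absolutely and uniformly on the triangle,
and its sum `G(x,t)` is continuous there. -/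
theorem stmt_4 (M : ℝ → ℝ → ℂ)
    (hM : ContinuousOn (fun p : ℝ × ℝ => M p.1 p.2) Triangle) :
    (∀ p ∈ Triangle, Summable (fun n : ℕ => ‖Gseq M n p.1 p.2‖)) ∧
    TendstoUniformlyOn
      (fun N : ℕ => fun p : ℝ × ℝ => ∑ n ∈ Finset.range N, Gseq M n p.1 p.2)
      (fun p : ℝ × ℝ => ∑' n : ℕ, Gseq M n p.1 p.2) atTop Triangle ∧
    ContinuousOn (fun p : ℝ × ℝ => ∑' n : ℕ, Gseq M n p.1 p.2) Triangle := by
  have hpi : (0:ℝ) < Real.pi := Real.pi_pos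
  have hTcl : IsClosed Triangle :=
    (isClosed_le continuous_const continuous_snd).inter
      ((isClosed_le continuous_snd continuous_fst).inter
        (isClosed_le continuous_fst continuous_const))
  obtain ⟨g, hg⟩ := ContinuousMap.exists_restrict_eq hTcl
    ⟨Triangle.restrict (fun p : ℝ × ℝ => M p.1 p.2), hM.restrict⟩
  set N : ℝ → ℝ → ℂ := fun x t => g (x, t) with hNdef
  have hN : Continuous fun p : ℝ × ℝ => N p.1 p.2 := g.continuous
  have hMN : ∀ x t : ℝ, (x, t) ∈ Triangle → M x t = N x t := by
    intro x t hp
    exact (ContinuousMap.congr_fun hg ⟨(x, t), hp⟩).symm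
  obtain ⟨C₀, hC₀⟩ := (isCompact_Icc.prod isCompact_Icc).exists_bound_of_continuousOn
      (s := Icc (0:ℝ) Real.pi ×ˢ Icc (0:ℝ) Real.pi) hN.continuousOn
  set C := max C₀ 0 with hCdef
  have hC0 : (0:ℝ) ≤ C := le_max_right _ _
  have hC : ∀ s τ : ℝ, s ∈ Icc 0 Real.pi → τ ∈ Icc 0 Real.pi → ‖N s τ‖ ≤ C := fun s τ hs hτ =>
    le_trans (hC₀ (s, τ) (Set.mk_mem_prod hs hτ)) (le_max_left _ _)
  set D := C * (Real.pi + 1) with hDdef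
  have hD0 : 0 ≤ D := by positivity
  have hEq := Gseq_congr hMN
  set u : ℕ → ℝ := fun n => (Real.pi * D) * ((D * Real.pi) ^ n / n.factorial) with hu
  have husum : Summable u := (Real.summable_pow_div_factorial (D * Real.pi)).mul_left _
  have hb : ∀ (n : ℕ) (p : ℝ × ℝ), p ∈ Triangle → ‖Gseq M n p.1 p.2‖ ≤ u n := by
    intro n p hp
    obtain ⟨ht0, htx, hxpi⟩ := hp
    have hp' : (p.1, p.2) ∈ Triangle := ⟨ht0, htx, hxpi⟩
    rw [hEq n p.1 p.2 hp']
    refine (Gseq_bound hN hC0 hC n p.1 p.2 hp').trans ?_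
    have h10 : (0:ℝ) ≤ p.1 := le_trans ht0 htx
    have hfact : (0:ℝ) < n.factorial := by positivity
    calc D ^ (n + 1) * p.2 * p.1 ^ n / n.factorial
        ≤ D ^ (n + 1) * Real.pi * Real.pi ^ n / n.factorial := by
          have h2pi : p.2 ≤ Real.pi := le_trans htx hxpi
          gcongr
      _ = u n := by
          have key : ∀ (d q : ℝ) (m : ℕ),
              d ^ (m + 1) * q * q ^ m / (m.factorial : ℝ)
                = q * d * ((d * q) ^ m / (m.factorial : ℝ)) := by
            intro d q m
            rw [mul_pow, pow_succ]
            ring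
          simp only [hu]
          exact key D Real.pi n
  refine ⟨fun p hp => Summable.of_nonneg_of_le (fun n => norm_nonneg _)
      (fun n => hb n p hp) husum, ?_, ?_⟩
  · exact tendstoUniformlyOn_tsum_nat husum (fun n p hp => hb n p hp)
  · apply (tendstoUniformlyOn_tsum_nat husum (fun n p hp => hb n p hp)).continuousOn
    apply Frequently.of_forall
    intro k
    apply continuousOn_finset_sum
    intro i _
    exact ((Gseq_cont hN i).continuousOn).congr (fun p hp => hEq i p.1 p.2 hp)
end

section
/- Let M be a complex-valued continuous kernel on the triangle {(x,t) : 0 ≤ t ≤ x ≤ π} and λ ∈ ℂ. Let e : [0,π] → ℂ be differentiable and satisfy i·e'(x) + ∫₀ˣ M(x,t)·e(t) dt = λ·e(x) with e(0) = 1, and let ψ : [0,π] → ℂ be differentiable and satisfy −i·ψ'(x) + ∫ₓ^π M(t,x)·ψ(t) dt = λ·ψ(x) with ψ(π) = 1. Then e(π) = ψ(0). -/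
open Complex MeasureTheory Set Real

/-- Clamp a real number to `[0, π]`. -/
noncomputable def clampPi (x : ℝ) : ℝ := max 0 (min x Real.pi)

lemma clampPi_continuous : Continuous clampPi :=
  continuous_const.max (continuous_id.min continuous_const)

lemma clampPi_mem (x : ℝ) : clampPi x ∈ Icc (0:ℝ) Real.pi :=
  ⟨le_max_left _ _, max_le Real.pi_pos.le (min_le_right _ _)⟩

lemma clampPi_eq {x : ℝ} (hx : x ∈ Icc (0:ℝ) Real.pi) : clampPi x = x := by
  rw [clampPi, min_eq_left hx.2, max_eq_right hx.1]

/-- Fubini over the triangle `0 ≤ v ≤ u ≤ π` for a continuous function. -/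
lemma triangle_swap (F : ℝ × ℝ → ℂ) (hF : Continuous F) :
    (∫ u in (0:ℝ)..Real.pi, ∫ v in (0:ℝ)..u, F (u, v)) =
      ∫ v in (0:ℝ)..Real.pi, ∫ u in v..Real.pi, F (u, v) := by
  have hπ : (0:ℝ) ≤ Real.pi := Real.pi_pos.le
  have hSm : MeasurableSet {p : ℝ × ℝ | p.2 ≤ p.1} :=
    measurableSet_le measurable_snd measurable_fst
  set G : ℝ × ℝ → ℂ := ({p : ℝ × ℝ | p.2 ≤ p.1}).indicator F with hG
  have slice1 : ∀ u a b : ℝ, IntervalIntegrable (fun v => G (u, v)) volume a b := by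
    intro u a b
    have hfun : (fun v => G (u, v)) = (Iic u).indicator (fun v => F (u, v)) := by
      funext v
      by_cases h : v ≤ u <;> simp [hG, Set.indicator, h]
    rw [hfun, intervalIntegrable_iff]
    exact (intervalIntegrable_iff.mp
      ((hF.comp (Continuous.prodMk_right u)).intervalIntegrable a b)).indicator measurableSet_Iic
  have slice2 : ∀ v a b : ℝ, IntervalIntegrable (fun u => G (u, v)) volume a b := by
    intro v a b
    have hfun : (fun u => G (u, v)) = (Ici v).indicator (fun u => F (u, v)) := by
      funext u
      by_cases h : v ≤ u <;> simp [hG, Set.indicator, h]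
    rw [hfun, intervalIntegrable_iff]
    exact (intervalIntegrable_iff.mp
      ((hF.comp (continuous_id.prodMk continuous_const)).intervalIntegrable a b)).indicator
        measurableSet_Ici
  have C1 : ∀ u ∈ Icc (0:ℝ) Real.pi,
      (∫ v in (0:ℝ)..Real.pi, G (u, v)) = ∫ v in (0:ℝ)..u, F (u, v) := by
    rintro u ⟨hu0, huπ⟩
    rw [← intervalIntegral.integral_add_adjacent_intervals (slice1 u 0 u)
      (slice1 u u Real.pi)]
    have h1 : (∫ v in (0:ℝ)..u, G (u, v)) = ∫ v in (0:ℝ)..u, F (u, v) := by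
      apply intervalIntegral.integral_congr
      intro v hv
      rw [uIcc_of_le hu0] at hv
      show G (u, v) = F (u, v)
      simp [hG, Set.indicator_apply, hv.2]
    have h2 : (∫ v in u..Real.pi, G (u, v)) = 0 := by
      rw [intervalIntegral.integral_of_le huπ]
      have heq : EqOn (fun v => G (u, v)) (fun _ => (0:ℂ)) (Ioc u Real.pi) := by
        intro v hv
        show G (u, v) = 0
        simp [hG, Set.indicator_apply, not_le.mpr hv.1]
      rw [setIntegral_congr_fun measurableSet_Ioc heq, integral_zero]
    rw [h1, h2, add_zero]
  have C2 : ∀ v ∈ Icc (0:ℝ) Real.pi,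
      (∫ u in (0:ℝ)..Real.pi, G (u, v)) = ∫ u in v..Real.pi, F (u, v) := by
    rintro v ⟨hv0, hvπ⟩
    rw [← intervalIntegral.integral_add_adjacent_intervals (slice2 v 0 v)
      (slice2 v v Real.pi)]
    have h1 : (∫ u in (0:ℝ)..v, G (u, v)) = 0 := by
      rw [intervalIntegral.integral_of_le hv0, MeasureTheory.integral_Ioc_eq_integral_Ioo]
      have heq : EqOn (fun u => G (u, v)) (fun _ => (0:ℂ)) (Ioo 0 v) := by
        intro u hu
        show G (u, v) = 0
        simp [hG, Set.indicator_apply, not_le.mpr hu.2]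
      rw [setIntegral_congr_fun measurableSet_Ioo heq, integral_zero]
    have h2 : (∫ u in v..Real.pi, G (u, v)) = ∫ u in v..Real.pi, F (u, v) := by
      apply intervalIntegral.integral_congr
      intro u hu
      rw [uIcc_of_le hvπ] at hu
      show G (u, v) = F (u, v)
      simp [hG, Set.indicator_apply, hu.1]
    rw [h1, h2, zero_add]
  have hGint : Integrable (Function.uncurry fun u v => G (u, v))
      ((volume.restrict (Ioc (0:ℝ) Real.pi)).prod (volume.restrict (Ioc (0:ℝ) Real.pi))) := by
    rw [Measure.prod_restrict]
    have hF' : IntegrableOn F (Ioc (0:ℝ) Real.pi ×ˢ Ioc (0:ℝ) Real.pi)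
        (volume.prod volume) := by
      refine IntegrableOn.mono_set ?_ (Set.prod_mono Ioc_subset_Icc_self Ioc_subset_Icc_self)
      exact hF.continuousOn.integrableOn_compact (isCompact_Icc.prod isCompact_Icc)
    have : Integrable (({p : ℝ × ℝ | p.2 ≤ p.1}).indicator F)
        ((volume.prod volume).restrict (Ioc (0:ℝ) Real.pi ×ˢ Ioc (0:ℝ) Real.pi)) :=
      hF'.indicator hSm
    exact this
  calc (∫ u in (0:ℝ)..Real.pi, ∫ v in (0:ℝ)..u, F (u, v))
      = ∫ u in (0:ℝ)..Real.pi, ∫ v in (0:ℝ)..Real.pi, G (u, v) := by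
        apply intervalIntegral.integral_congr
        intro u hu
        rw [uIcc_of_le hπ] at hu
        exact (C1 u hu).symm
    _ = ∫ v in (0:ℝ)..Real.pi, ∫ u in (0:ℝ)..Real.pi, G (u, v) := by
        simp_rw [intervalIntegral.integral_of_le hπ]
        exact MeasureTheory.integral_integral_swap hGint
    _ = ∫ v in (0:ℝ)..Real.pi, ∫ u in v..Real.pi, F (u, v) := by
        apply intervalIntegral.integral_congr
        intro v hv
        rw [uIcc_of_le hπ] at hv
        exact C2 v hv

/-- If `e` solves equation (1) with `e(0) = 1` and `ψ` solves the adjoint equation (13)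
with `ψ(π) = 1` (both with the same kernel `M` and spectral parameter `λ`),
then `e(π) = ψ(0)`. -/
theorem stmt_8 (M : ℝ → ℝ → ℂ)
    (hM : ContinuousOn (fun p : ℝ × ℝ => M p.1 p.2) Triangle)
    (lam : ℂ) (e e' ψ ψ' : ℝ → ℂ)
    (he : ∀ x ∈ Icc (0:ℝ) Real.pi,
      HasDerivWithinAt e (e' x) (Icc 0 Real.pi) x ∧
      Complex.I * e' x + (∫ t in (0:ℝ)..x, M x t * e t) = lam * e x)
    (he0 : e 0 = 1)
    (hψ : ∀ x ∈ Icc (0:ℝ) Real.pi,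
      HasDerivWithinAt ψ (ψ' x) (Icc 0 Real.pi) x ∧
      -(Complex.I * ψ' x) + (∫ t in x..Real.pi, M t x * ψ t) = lam * ψ x)
    (hψπ : ψ Real.pi = 1) :
    e Real.pi = ψ 0 := by
  have hπ : (0:ℝ) ≤ Real.pi := Real.pi_pos.le
  have heC : ContinuousOn e (Icc 0 Real.pi) := fun x hx => ((he x hx).1.continuousWithinAt)
  have hψC : ContinuousOn ψ (Icc 0 Real.pi) := fun x hx => ((hψ x hx).1.continuousWithinAt)
  set ec : ℝ → ℂ := fun x => e (clampPi x) with hec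
  set ψc : ℝ → ℂ := fun x => ψ (clampPi x) with hψc
  have hecC : Continuous ec := heC.comp_continuous clampPi_continuous clampPi_mem
  have hψcC : Continuous ψc := hψC.comp_continuous clampPi_continuous clampPi_mem
  have hecEq : ∀ x ∈ Icc (0:ℝ) Real.pi, ec x = e x := by
    intro x hx; rw [hec]; simp only; rw [clampPi_eq hx]
  have hψcEq : ∀ x ∈ Icc (0:ℝ) Real.pi, ψc x = ψ x := by
    intro x hx; rw [hψc]; simp only; rw [clampPi_eq hx]
  set Mc : ℝ → ℝ → ℂ := fun u v => M (clampPi u) (max 0 (min v (clampPi u))) with hMcd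
  have hMcC : Continuous fun p : ℝ × ℝ => Mc p.1 p.2 := by
    have hproj : Continuous fun p : ℝ × ℝ =>
        ((clampPi p.1, max 0 (min p.2 (clampPi p.1))) : ℝ × ℝ) :=
      ((clampPi_continuous.comp continuous_fst).prodMk
        (continuous_const.max (continuous_snd.min (clampPi_continuous.comp continuous_fst))))
    have hmaps : ∀ p : ℝ × ℝ,
        ((clampPi p.1, max 0 (min p.2 (clampPi p.1))) : ℝ × ℝ) ∈ Triangle := by
      intro p
      refine ⟨le_max_left _ _, ?_, (clampPi_mem p.1).2⟩
      exact max_le (clampPi_mem p.1).1 (min_le_right _ _)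
    exact hM.comp_continuous hproj hmaps
  have hMcEq : ∀ u v : ℝ, (u, v) ∈ Triangle → Mc u v = M u v := by
    rintro u v ⟨h1, h2, h3⟩
    have hu : clampPi u = u := clampPi_eq ⟨le_trans h1 h2, h3⟩
    rw [hMcd]; simp only
    rw [hu, min_eq_left h2, max_eq_right h1]
  set A : ℝ → ℂ := fun x => ∫ t in x..Real.pi, Mc t x * ψc t with hA
  set B : ℝ → ℂ := fun x => ∫ t in (0:ℝ)..x, Mc x t * ec t with hB
  have hAC : Continuous A := by
    have hf : Continuous (Function.uncurry fun (x t : ℝ) => Mc t x * ψc t) :=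
      (hMcC.comp continuous_swap).mul (hψcC.comp continuous_snd)
    have h1 : Continuous fun x => ∫ t in Real.pi..x, Mc t x * ψc t :=
      intervalIntegral.continuous_parametric_intervalIntegral_of_continuous hf continuous_id
    have : A = fun x => -(∫ t in Real.pi..x, Mc t x * ψc t) := by
      funext x
      rw [hA]; simp only
      rw [intervalIntegral.integral_symm]
    rw [this]
    exact h1.neg
  have hBC : Continuous B := by
    have hf : Continuous (Function.uncurry fun (x t : ℝ) => Mc x t * ec t) :=
      hMcC.mul (hecC.comp continuous_snd)
    exact intervalIntegral.continuous_parametric_intervalIntegral_of_continuous hf continuous_id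
  set h : ℝ → ℂ := fun x => ec x * A x - ψc x * B x with hh
  have hhC : Continuous h := (hecC.mul hAC).sub (hψcC.mul hBC)
  have key : ∀ x ∈ Icc (0:ℝ) Real.pi,
      HasDerivWithinAt (fun y => Complex.I * (e y * ψ y)) (h x) (Icc 0 Real.pi) x := by
    intro x hx
    have hd := ((he x hx).1.mul (hψ x hx).1).const_mul Complex.I
    have hBx : B x = ∫ t in (0:ℝ)..x, M x t * e t := by
      apply intervalIntegral.integral_congr
      intro t ht
      rw [uIcc_of_le hx.1] at ht
      show Mc x t * ec t = M x t * e t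
      rw [hMcEq x t ⟨ht.1, ht.2, hx.2⟩, hecEq t ⟨ht.1, le_trans ht.2 hx.2⟩]
    have hAx : A x = ∫ t in x..Real.pi, M t x * ψ t := by
      apply intervalIntegral.integral_congr
      intro t ht
      rw [uIcc_of_le hx.2] at ht
      show Mc t x * ψc t = M t x * ψ t
      rw [hMcEq t x ⟨hx.1, ht.1, ht.2⟩, hψcEq t ⟨le_trans hx.1 ht.1, ht.2⟩]
    have h1 := (he x hx).2
    have h2 := (hψ x hx).2
    rw [← hBx] at h1
    rw [← hAx] at h2
    have heq : h x = Complex.I * (e' x * ψ x + e x * ψ' x) := by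
      rw [hh]; simp only
      rw [hecEq x hx, hψcEq x hx]
      linear_combination e x * h2 - ψ x * h1
    rw [heq]
    exact hd
  have hcont : ContinuousOn (fun y => Complex.I * (e y * ψ y)) (Icc 0 Real.pi) :=
    continuous_const.continuousOn.mul (heC.mul hψC)
  have hderiv : ∀ x ∈ Ioo (0:ℝ) Real.pi,
      HasDerivWithinAt (fun y => Complex.I * (e y * ψ y)) (h x) (Ioi x) x := fun x hx =>
    (key x (Ioo_subset_Icc_self hx)).mono_of_mem_nhdsWithin
      (nhdsWithin_le_nhds (Icc_mem_nhds hx.1 hx.2))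
  have ftc := intervalIntegral.integral_eq_sub_of_hasDeriv_right_of_le hπ hcont hderiv
    (hhC.intervalIntegrable 0 Real.pi)
  -- The integral of h vanishes by Fubini over the triangle.
  set F : ℝ × ℝ → ℂ := fun p => Mc p.1 p.2 * ψc p.1 * ec p.2 with hF
  have hFC : Continuous F :=
    (hMcC.mul (hψcC.comp continuous_fst)).mul (hecC.comp continuous_snd)
  have hint : (∫ x in (0:ℝ)..Real.pi, h x) = 0 := by
    have e1 : (∫ x in (0:ℝ)..Real.pi, ec x * A x) =
        ∫ v in (0:ℝ)..Real.pi, ∫ u in v..Real.pi, F (u, v) := by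
      apply intervalIntegral.integral_congr
      intro v _
      show ec v * A v = _
      rw [hA]; simp only
      rw [← intervalIntegral.integral_const_mul]
      apply intervalIntegral.integral_congr
      intro u _
      show ec v * (Mc u v * ψc u) = F (u, v)
      rw [hF]; simp only; ring
    have e2 : (∫ x in (0:ℝ)..Real.pi, ψc x * B x) =
        ∫ u in (0:ℝ)..Real.pi, ∫ v in (0:ℝ)..u, F (u, v) := by
      apply intervalIntegral.integral_congr
      intro u _
      show ψc u * B u = _
      rw [hB]; simp only
      rw [← intervalIntegral.integral_const_mul]
      apply intervalIntegral.integral_congr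
      intro v _
      show ψc u * (Mc u v * ec v) = F (u, v)
      rw [hF]; simp only; ring
    have hsub : (∫ x in (0:ℝ)..Real.pi, h x) =
        (∫ x in (0:ℝ)..Real.pi, ec x * A x) - ∫ x in (0:ℝ)..Real.pi, ψc x * B x := by
      rw [hh]
      exact intervalIntegral.integral_sub ((hecC.mul hAC).intervalIntegrable 0 Real.pi)
        ((hψcC.mul hBC).intervalIntegrable 0 Real.pi)
    rw [hsub, e1, e2, ← triangle_swap F hFC, sub_self]
  rw [hint, hψπ, he0] at ftc
  have h3 : Complex.I * (e Real.pi - ψ 0) = 0 := by linear_combination -ftc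
  rcases mul_eq_zero.mp h3 with hc | hc
  · exact absurd hc Complex.I_ne_zero
  · exact sub_eq_zero.mp hc
end

section
/- Let B : [0,π] → ℂ be continuous with B(x) ≠ 0 for all x ∈ (0,π], let K be a complex-valued continuous function on the triangle {(x,t) : 0 ≤ t ≤ x ≤ π}, and let f : [0,π] → ℂ be continuous. If B(x)·f(π−x) + ∫ₓ^π K(t,x)·f(π−t) dt = 0 for all x ∈ [0,π], then f(x) = 0 for all x ∈ [0,π]. -/
open Complex MeasureTheory Set Real
open Topology Filter intervalIntegral

lemma gronwall_zero (f : ℝ → ℂ) (L : ℝ) (hL : 0 ≤ L) (C : ℝ) (_hC : 0 ≤ C)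
    (hf : ContinuousOn (fun u => ‖f u‖) (Icc 0 L))
    (h : ∀ s ∈ Icc (0:ℝ) L, ‖f s‖ ≤ C * ∫ u in (0:ℝ)..s, ‖f u‖) :
    ∀ s ∈ Icc (0:ℝ) L, f s = 0 := by
  set F : ℝ → ℝ := fun s => ∫ u in (0:ℝ)..s, ‖f u‖ with hF
  have hint0L : IntervalIntegrable (fun u => ‖f u‖) volume 0 L :=
    (hf.mono (by rw [uIcc_of_le hL])).intervalIntegrable
  have hint : ∀ s ∈ Icc (0:ℝ) L, IntervalIntegrable (fun u => ‖f u‖) volume 0 s := by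
    intro s hs
    exact hint0L.mono_set (by rw [uIcc_of_le hs.1, uIcc_of_le hL]; exact Icc_subset_Icc le_rfl hs.2)
  have hFnonneg : ∀ s ∈ Icc (0:ℝ) L, 0 ≤ F s := by
    intro s hs
    exact intervalIntegral.integral_nonneg hs.1 (fun u _ => norm_nonneg _)
  have hFcont : ContinuousOn F (Icc 0 L) := by
    have := continuousOn_primitive_interval' (μ := volume) hint0L
      (a := 0) (by rw [uIcc_of_le hL]; exact ⟨le_rfl, hL⟩)
    rwa [uIcc_of_le hL] at this
  have hFderiv : ∀ s ∈ Ioo (0:ℝ) L, HasDerivAt F (‖f s‖) s := by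
    intro s hs
    have hca : ContinuousAt (fun u => ‖f u‖) s :=
      hf.continuousAt (Icc_mem_nhds hs.1 hs.2)
    refine intervalIntegral.integral_hasDerivAt_right (hint s ⟨hs.1.le, hs.2.le⟩)
      ?_ hca
    exact ContinuousOn.stronglyMeasurableAtFilter isOpen_Ioo
      (hf.mono Ioo_subset_Icc_self) s hs
  set G : ℝ → ℝ := fun s => F s * Real.exp (-C * s) with hG
  have hGanti : AntitoneOn G (Icc 0 L) := by
    apply antitoneOn_of_deriv_nonpos (convex_Icc 0 L)
    · exact hFcont.mul ((Real.continuous_exp.comp (continuous_const.mul continuous_id)).continuousOn)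
    · intro s hs
      rw [interior_Icc] at hs
      have hd : HasDerivAt G (‖f s‖ * Real.exp (-C * s) + F s * (-C * Real.exp (-C * s))) s := by
        have he : HasDerivAt (fun u => Real.exp (-C * u)) (-C * Real.exp (-C * s)) s := by
          have := (Real.hasDerivAt_exp (-C * s)).comp s ((hasDerivAt_id s).const_mul (-C))
          simpa [Function.comp_def, mul_comm] using this
        exact (hFderiv s hs).mul he
      exact hd.differentiableAt.differentiableWithinAt
    · intro s hs
      rw [interior_Icc] at hs
      have he : HasDerivAt (fun u => Real.exp (-C * u)) (-C * Real.exp (-C * s)) s := by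
        have := (Real.hasDerivAt_exp (-C * s)).comp s ((hasDerivAt_id s).const_mul (-C))
        simpa [Function.comp_def, mul_comm] using this
      have hd : HasDerivAt G (‖f s‖ * Real.exp (-C * s) + F s * (-C * Real.exp (-C * s))) s :=
        (hFderiv s hs).mul he
      rw [hd.deriv]
      have hb := h s ⟨hs.1.le, hs.2.le⟩
      have hexp : (0:ℝ) < Real.exp (-C * s) := Real.exp_pos _
      nlinarith [hb, hexp]
  have hGzero : ∀ s ∈ Icc (0:ℝ) L, G s = 0 := by
    intro s hs
    have h1 : G s ≤ G 0 := hGanti ⟨le_rfl, hL⟩ hs hs.1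
    have h2 : G 0 = 0 := by simp [hG, hF]
    have h3 : 0 ≤ G s := mul_nonneg (hFnonneg s hs) (Real.exp_nonneg _)
    linarith
  intro s hs
  have hFz : F s = 0 := by
    have h0 := hGzero s hs
    rcases mul_eq_zero.mp h0 with h' | h'
    · exact h'
    · exact absurd h' (Real.exp_ne_zero _)
  have hb := h s hs
  rw [show (∫ u in (0:ℝ)..s, ‖f u‖) = F s from rfl, hFz, mul_zero] at hb
  exact norm_le_zero_iff.mp hb

lemma triangle_compact : IsCompact Triangle := by
  apply IsCompact.of_isClosed_subset (isCompact_Icc (a := ((0:ℝ),(0:ℝ))) (b := (Real.pi, Real.pi)))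
  · have : Triangle = {p : ℝ × ℝ | 0 ≤ p.2} ∩ ({p | p.2 ≤ p.1} ∩ {p | p.1 ≤ Real.pi}) := by
      ext p; simp [Triangle, and_assoc]
    rw [this]
    exact (isClosed_le continuous_const continuous_snd).inter
      ((isClosed_le continuous_snd continuous_fst).inter
        (isClosed_le continuous_fst continuous_const))
  · rintro ⟨a, b⟩ ⟨h1, h2, h3⟩
    exact ⟨⟨h1.trans h2, h1⟩, ⟨h3, h2.trans h3⟩⟩

/-- A Volterra-type homogeneous equation
`B(x) f(π−x) + ∫ₓ^π K(t,x) f(π−t) dt = 0` on `[0,π]` with continuous `B`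
nonvanishing on `(0,π]` and continuous `K` forces `f ≡ 0` on `[0,π]`. -/
theorem stmt_13 (B : ℝ → ℂ) (hB : ContinuousOn B (Icc 0 Real.pi))
    (hB0 : ∀ x ∈ Ioc (0:ℝ) Real.pi, B x ≠ 0)
    (K : ℝ → ℝ → ℂ)
    (hK : ContinuousOn (fun p : ℝ × ℝ => K p.1 p.2) Triangle)
    (f : ℝ → ℂ) (hf : ContinuousOn f (Icc 0 Real.pi))
    (heq : ∀ x ∈ Icc (0:ℝ) Real.pi,
      B x * f (Real.pi - x) + (∫ t in x..Real.pi, K t x * f (Real.pi - t)) = 0) :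
    ∀ x ∈ Icc (0:ℝ) Real.pi, f x = 0 := by
  have hπ : (0:ℝ) < Real.pi := Real.pi_pos
  -- bound on K
  obtain ⟨M0, hM0⟩ := triangle_compact.exists_bound_of_continuousOn hK
  set M := max M0 0 with hM
  have hMnn : (0:ℝ) ≤ M := le_max_right _ _
  have hMb : ∀ p ∈ Triangle, ‖K p.1 p.2‖ ≤ M := fun p hp => (hM0 p hp).trans (le_max_left _ _)
  -- main claim on Ico
  have key : ∀ x ∈ Ico (0:ℝ) Real.pi, f x = 0 := by
    intro x hx
    -- minimum of ‖B‖ on [π - x, π]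
    set c := Real.pi - x with hc
    have hc0 : 0 < c := by simp [hc]; linarith [hx.2]
    have hcπ : c ≤ Real.pi := by simp [hc]; exact hx.1
    obtain ⟨z, hz, hzmin⟩ := (isCompact_Icc (a := c) (b := Real.pi)).exists_isMinOn
      ⟨Real.pi, hcπ, le_rfl⟩ ((hB.mono (Icc_subset_Icc hc0.le le_rfl)).norm)
    have hzIoc : z ∈ Ioc (0:ℝ) Real.pi := ⟨hc0.trans_le hz.1, hz.2⟩
    set b := ‖B z‖ with hb
    have hb0 : 0 < b := norm_pos_iff.mpr (hB0 z hzIoc)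
    set C := M / b with hC
    have hC0 : 0 ≤ C := div_nonneg hMnn hb0.le
    -- the Gronwall inequality on [0, x]
    have hineq : ∀ s ∈ Icc (0:ℝ) x, ‖f s‖ ≤ C * ∫ u in (0:ℝ)..s, ‖f u‖ := by
      intro s hs
      set y := Real.pi - s with hy
      have hyI : y ∈ Icc c Real.pi := by
        constructor
        · simp only [hy, hc]; linarith [hs.2]
        · simp only [hy]; linarith [hs.1]
      have hy0π : y ∈ Icc (0:ℝ) Real.pi := ⟨hc0.le.trans hyI.1, hyI.2⟩
      have hyπ : y ≤ Real.pi := hyI.2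
      have heqy := heq y hy0π
      have hπy : Real.pi - y = s := by simp [hy]
      rw [hπy] at heqy
      -- continuity of the integrand on [y, π]
      have hmapf : ContinuousOn (fun t => f (Real.pi - t)) (Icc y Real.pi) := by
        have : ContinuousOn (f ∘ (fun t : ℝ => Real.pi - t)) (Icc y Real.pi) := by
          apply hf.comp ((continuous_const.sub continuous_id).continuousOn)
          intro t ht
          show Real.pi - t ∈ Icc 0 Real.pi
          exact ⟨by linarith [ht.2], by linarith [ht.1, hy0π.1]⟩
        exact this
      have hcont1 : ContinuousOn (fun t => K t y * f (Real.pi - t)) (Icc y Real.pi) := by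
        apply ContinuousOn.mul
        · have : ContinuousOn ((fun p : ℝ × ℝ => K p.1 p.2) ∘ (fun t : ℝ => (t, y)))
              (Icc y Real.pi) := by
            apply hK.comp ((continuous_id.prodMk continuous_const).continuousOn)
            intro t ht
            exact ⟨hc0.le.trans hyI.1, ht.1, ht.2⟩
          exact this
        · exact hmapf
      have hcont2 : ContinuousOn (fun t => ‖f (Real.pi - t)‖) (Icc y Real.pi) := hmapf.norm
      have hii1 : IntervalIntegrable (fun t => K t y * f (Real.pi - t)) volume y Real.pi :=
        (hcont1.mono (by rw [uIcc_of_le hyπ])).intervalIntegrable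
      have hii2 : IntervalIntegrable (fun t => ‖K t y * f (Real.pi - t)‖) volume y Real.pi :=
        ((hcont1.norm).mono (by rw [uIcc_of_le hyπ])).intervalIntegrable
      have hii3 : IntervalIntegrable (fun t => M * ‖f (Real.pi - t)‖) volume y Real.pi :=
        (((hcont2.const_smul M).mono (by rw [uIcc_of_le hyπ])).intervalIntegrable)
      -- bound the norm of the integral
      have hbound : ‖∫ t in y..Real.pi, K t y * f (Real.pi - t)‖
          ≤ M * ∫ u in (0:ℝ)..s, ‖f u‖ := by
        calc ‖∫ t in y..Real.pi, K t y * f (Real.pi - t)‖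
            ≤ ∫ t in y..Real.pi, ‖K t y * f (Real.pi - t)‖ :=
              intervalIntegral.norm_integral_le_integral_norm hyπ
          _ ≤ ∫ t in y..Real.pi, M * ‖f (Real.pi - t)‖ := by
              apply intervalIntegral.integral_mono_on hyπ hii2 hii3
              intro t ht
              rw [norm_mul]
              apply mul_le_mul_of_nonneg_right _ (norm_nonneg _)
              exact hMb (t, y) ⟨hc0.le.trans hyI.1, ht.1, ht.2⟩
          _ = M * ∫ t in y..Real.pi, ‖f (Real.pi - t)‖ := intervalIntegral.integral_const_mul _ _
          _ = M * ∫ u in (0:ℝ)..s, ‖f u‖ := by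
              rw [intervalIntegral.integral_comp_sub_left (fun u => ‖f u‖) Real.pi]
              norm_num [hy]
      -- from the equation
      have heqy2 : B y * f s = -(∫ t in y..Real.pi, K t y * f (Real.pi - t)) := by
        linear_combination heqy
      have hBfs : ‖B y‖ * ‖f s‖ ≤ M * ∫ u in (0:ℝ)..s, ‖f u‖ := by
        rw [← norm_mul, heqy2, norm_neg]
        exact hbound
      have hble : b ≤ ‖B y‖ := hzmin hyI
      have h1 : b * ‖f s‖ ≤ M * ∫ u in (0:ℝ)..s, ‖f u‖ :=
        le_trans (mul_le_mul_of_nonneg_right hble (norm_nonneg _)) hBfs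
      rw [hC, div_mul_eq_mul_div, le_div_iff₀ hb0]
      linarith [h1]
    have hfc : ContinuousOn (fun u => ‖f u‖) (Icc 0 x) :=
      (hf.mono (Icc_subset_Icc le_rfl hx.2.le)).norm
    exact gronwall_zero f x hx.1 C hC0 hfc hineq x ⟨hx.1, le_rfl⟩
  -- endpoint
  intro x hx
  rcases eq_or_lt_of_le hx.2 with hxe | hxl
  · subst hxe
    have hcw : ContinuousWithinAt f (Ico 0 Real.pi) Real.pi :=
      (hf _ hx).mono Ico_subset_Icc_self
    have hne : (𝓝[Ico (0:ℝ) Real.pi] Real.pi).NeBot := by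
      rw [← mem_closure_iff_nhdsWithin_neBot, closure_Ico (by linarith : (0:ℝ) ≠ Real.pi)]
      exact ⟨hπ.le, le_rfl⟩
    have h2 : Filter.Tendsto f (𝓝[Ico (0:ℝ) Real.pi] Real.pi) (𝓝 0) := by
      apply Filter.Tendsto.congr' _ tendsto_const_nhds
      filter_upwards [self_mem_nhdsWithin] with u hu
      exact (key u hu).symm
    exact tendsto_nhds_unique hcw h2
  · exact key x ⟨hx.1, hxl⟩
end
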